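/- With A_{α,β} as above, if |β| = |α| then A_{α,β}(w) is a monomial: A_{α,β}(w) = C_{α,β} (−1)^{|α^{(n)}|} w_n^{|α^{(n)}|} (w^{(n)})^{β − α^{(n)}}, where C_{α,β} is the multinomial coefficient binom(α_n; β₁−α₁, …, β_{n−1}−α_{n−1}, 0) when β_j ≥ α_j for all 1 ≤ j ≤ n−1, and C_{α,β} = 0 otherwise. Moreover, for every α with |α| ≥ 1 there exists β with |β| = |α| and C_{α,β} ≠ 0. -/

import Mathlib

open MvPolynomial

namespace ACoeffAux

variable {σ : Type*} {R : Type*} [CommRing R]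

def deg (β : σ →₀ ℕ) : ℕ := β.sum fun _ k => k

lemma deg_add (β γ : σ →₀ ℕ) : deg (β + γ) = deg β + deg γ :=
  Finsupp.sum_add_index' (fun _ => rfl) (fun _ _ _ => rfl)

lemma deg_eq_sum {n : ℕ} (β : Fin n →₀ ℕ) : deg β = ∑ i, β i :=
  Finsupp.sum_fintype _ _ (fun _ => rfl)

lemma coeff_zero_of_lt {f : MvPolynomial σ R} {β : σ →₀ ℕ} {d : ℕ}
    (hf : f.totalDegree ≤ d) (h : d < deg β) : coeff β f = 0 :=
  coeff_eq_zero_of_totalDegree_lt (lt_of_le_of_lt hf h)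

def TopEq (d : ℕ) (f g : MvPolynomial σ R) : Prop :=
  f.totalDegree ≤ d ∧ g.totalDegree ≤ d ∧
    ∀ β : σ →₀ ℕ, d ≤ deg β → coeff β f = coeff β g

lemma TopEq.mul {d e : ℕ} {f g p q : MvPolynomial σ R} (h1 : TopEq d f g) (h2 : TopEq e p q) :
    TopEq (d + e) (f * p) (g * q) := by
  obtain ⟨hf, hg, hfg⟩ := h1
  obtain ⟨hp, hq, hpq⟩ := h2
  classical
  refine ⟨(totalDegree_mul _ _).trans (add_le_add hf hp),
    (totalDegree_mul _ _).trans (add_le_add hg hq), fun β hβ => ?_⟩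
  rw [coeff_mul, coeff_mul]
  refine Finset.sum_congr rfl fun x hx => ?_
  rw [Finset.HasAntidiagonal.mem_antidiagonal] at hx
  have hsum : deg x.1 + deg x.2 = deg β := by rw [← deg_add, hx]
  by_cases h1 : d ≤ deg x.1
  · by_cases h2 : e ≤ deg x.2
    · rw [hfg _ h1, hpq _ h2]
    · have hlt : d < deg x.1 := by omega
      rw [coeff_zero_of_lt hf hlt, coeff_zero_of_lt hg hlt, zero_mul, zero_mul]
  · have hlt : e < deg x.2 := by omega
    rw [coeff_zero_of_lt hp hlt, coeff_zero_of_lt hq hlt, mul_zero, mul_zero]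

lemma TopEq.one : TopEq (σ := σ) (R := R) 0 1 1 :=
  ⟨by simp [totalDegree_one], by simp [totalDegree_one], fun _ _ => rfl⟩

lemma TopEq.pow {d : ℕ} {f g : MvPolynomial σ R} (h : TopEq d f g) (n : ℕ) :
    TopEq (n * d) (f ^ n) (g ^ n) := by
  induction n with
  | zero => simpa using TopEq.one
  | succ n ih =>
    have harith : (n + 1) * d = n * d + d := by ring
    rw [harith, pow_succ, pow_succ]
    exact ih.mul h

lemma TopEq.prod {ι : Type*} (s : Finset ι) (f g : ι → MvPolynomial σ R) (d : ι → ℕ)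
    (h : ∀ i ∈ s, TopEq (d i) (f i) (g i)) :
    TopEq (∑ i ∈ s, d i) (∏ i ∈ s, f i) (∏ i ∈ s, g i) := by
  classical
  induction s using Finset.cons_induction with
  | empty => simpa using TopEq.one
  | cons a s ha ih =>
    rw [Finset.sum_cons, Finset.prod_cons, Finset.prod_cons]
    exact (h a (Finset.mem_cons_self a s)).mul (ih fun i hi => h i (Finset.mem_cons_of_mem hi))

lemma monomial_finset_sum {ι : Type*} (s : Finset ι) (h : ι → (σ →₀ ℕ)) :
    (monomial (∑ i ∈ s, h i) (1 : R)) = ∏ i ∈ s, monomial (h i) 1 := by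
  classical
  induction s using Finset.cons_induction with
  | empty => simp
  | cons a s ha ih => rw [Finset.sum_cons, Finset.prod_cons, ← ih, monomial_mul, one_mul]

lemma sum_single_apply {n : ℕ} (k : Fin n → ℕ) (j : Fin n) :
    (∑ i, Finsupp.single i (k i)) j = k j := by
  rw [Finset.sum_apply']
  simp [Finsupp.single_apply]

lemma coeff_sum_C_mul_X_pow {n : ℕ} (c : Fin n → R) (a : ℕ)
    (γ : Fin n →₀ ℕ) (hγ : ∑ i, γ i = a) :
    coeff γ ((∑ i, C (c i) * X i) ^ a) =
      (Nat.multinomial Finset.univ fun i => γ i : R) * ∏ i, c i ^ γ i := by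
  rw [Finset.sum_pow_eq_sum_piAntidiag, coeff_sum]
  have hterm : ∀ k : Fin n → ℕ,
      ((Nat.multinomial Finset.univ k : MvPolynomial (Fin n) R) *
        ∏ i, (C (c i) * X i) ^ k i) =
      monomial (∑ i, Finsupp.single i (k i))
        ((Nat.multinomial Finset.univ k : R) * ∏ i, c i ^ k i) := by
    intro k
    have h1 : ∏ i, (C (c i) * X i) ^ k i =
        monomial (∑ i, Finsupp.single i (k i)) (∏ i, c i ^ k i : R) := by
      have hX : (∏ i, (X i : MvPolynomial (Fin n) R) ^ k i) =
          monomial (∑ i, Finsupp.single i (k i)) 1 := by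
        simp_rw [X_pow_eq_monomial]
        rw [← monomial_finset_sum]
      simp_rw [mul_pow]
      rw [Finset.prod_mul_distrib, hX]
      simp_rw [← map_pow (C (σ := Fin n) (R := R))]
      rw [← map_prod, C_mul_monomial, mul_one]
    rw [h1]
    have h2 : (Nat.multinomial Finset.univ k : MvPolynomial (Fin n) R) =
        C ((Nat.multinomial Finset.univ k : R)) := by simp
    rw [h2, C_mul_monomial]
  rw [Finset.sum_congr rfl fun k _ => congrArg (coeff γ) (hterm k)]
  simp_rw [coeff_monomial]
  rw [Finset.sum_eq_single_of_mem (fun i => γ i)]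
  · rw [if_pos]
    ext j
    exact sum_single_apply _ j
  · rw [Finset.mem_piAntidiag]
    exact ⟨hγ, fun i _ => Finset.mem_univ i⟩
  · intro k hk hkne
    rw [if_neg]
    intro heq
    apply hkne
    funext j
    have := sum_single_apply k j
    rw [heq] at this
    exact this.symm

end ACoeffAux

open ACoeffAux


/-- The product `(w_n + w⁽ⁿ⁾·σ)^{α_n} (w⁽ⁿ⁾ - w_n σ)^{α⁽ⁿ⁾}`, viewed as a polynomial in
the variables `σ = (σ_1, …, σ_{n-1})` with coefficients that are polynomials in
`w = (w_1, …, w_n)`; here `n = m + 2`. Its `σ^β`-coefficient is `A_{α,β}(w)`. -/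
noncomputable def Aprod (m : ℕ) (α : Fin (m + 2) →₀ ℕ) :
    MvPolynomial (Fin (m + 1)) (MvPolynomial (Fin (m + 2)) ℝ) :=
  (C (X (Fin.last (m + 1))) + ∑ i : Fin (m + 1), C (X i.castSucc) * X i) ^
      (α (Fin.last (m + 1))) *
    ∏ i : Fin (m + 1), (C (X i.castSucc) - C (X (Fin.last (m + 1))) * X i) ^ (α i.castSucc)

/-- When `|β| = |α|`, the coefficient polynomial `A_{α,β}(w)` is the monomial
`C_{α,β} (-1)^{|α⁽ⁿ⁾|} w_n^{|α⁽ⁿ⁾|} (w⁽ⁿ⁾)^{β - α⁽ⁿ⁾}`, where `C_{α,β}` is the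
multinomial coefficient `(α_n; β₁-α₁, …, β_{n-1}-α_{n-1}, 0)` if `β_j ≥ α_j` for all
`j ≤ n-1` and `0` otherwise.  Moreover, if `|α| ≥ 1` then some `β` with `|β| = |α|` has
`C_{α,β} ≠ 0`. -/
theorem A_coeff_top_degree (m : ℕ) (α : Fin (m + 2) →₀ ℕ) :
    (∀ β : Fin (m + 1) →₀ ℕ, (β.sum fun _ k => k) = (α.sum fun _ k => k) →
      MvPolynomial.coeff β (Aprod m α) =
        (if ∀ i : Fin (m + 1), α i.castSucc ≤ β i
          then (Nat.multinomial Finset.univ (fun i : Fin (m + 1) => β i - α i.castSucc) :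
            MvPolynomial (Fin (m + 2)) ℝ)
          else 0) *
        (-1 : MvPolynomial (Fin (m + 2)) ℝ) ^ (∑ i : Fin (m + 1), α i.castSucc) *
        MvPolynomial.monomial
          (Finsupp.single (Fin.last (m + 1)) (∑ i : Fin (m + 1), α i.castSucc) +
            ∑ i : Fin (m + 1), Finsupp.single i.castSucc (β i - α i.castSucc)) (1 : ℝ)) ∧
    (1 ≤ (α.sum fun _ k => k) →
      ∃ β : Fin (m + 1) →₀ ℕ, (β.sum fun _ k => k) = (α.sum fun _ k => k) ∧
        ∀ i : Fin (m + 1), α i.castSucc ≤ β i) := by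
  classical
  set R := MvPolynomial (Fin (m + 2)) ℝ with hR
  set L : Fin (m + 2) := Fin.last (m + 1) with hL
  set a : ℕ := α L with ha
  set A' : ℕ := ∑ i : Fin (m + 1), α i.castSucc with hA'
  have hαsum : (α.sum fun _ k => k) = A' + a := by
    rw [show (α.sum fun _ k => k) = deg α from rfl, deg_eq_sum, Fin.sum_univ_castSucc]
  constructor
  · intro β hβ
    have hdegβ : ∑ i, β i = A' + a := by
      rw [← deg_eq_sum, show deg β = β.sum fun _ k => k from rfl, hβ, hαsum]
    set wl : R := X L with hwl
    set S : MvPolynomial (Fin (m + 1)) R := ∑ i : Fin (m + 1), C (X i.castSucc) * X i with hS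
    -- γ ≠ 0 when 1 ≤ deg γ
    have hne : ∀ γ : Fin (m + 1) →₀ ℕ, 1 ≤ deg γ → ¬((0 : Fin (m+1) →₀ ℕ) = γ) := by
      intro γ hγ h0
      rw [← h0] at hγ
      simp [deg] at hγ
    have hSdeg : S.totalDegree ≤ 1 := by
      refine (totalDegree_finset_sum _ _).trans (Finset.sup_le fun i _ => ?_)
      refine (totalDegree_mul _ _).trans ?_
      rw [totalDegree_C, totalDegree_X]
    have T1 : TopEq 1 (C wl + S) S := by
      refine ⟨(totalDegree_add _ _).trans (max_le (by simp [totalDegree_C]) hSdeg), hSdeg,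
        fun γ hγ => ?_⟩
      rw [coeff_add, coeff_C, if_neg (hne γ hγ), zero_add]
    have T2 : ∀ i : Fin (m + 1), TopEq 1 (C (X i.castSucc) - C wl * X i) (-(C wl * X i)) := by
      intro i
      have hdeg : (C wl * X i : MvPolynomial (Fin (m+1)) R).totalDegree ≤ 1 := by
        refine (totalDegree_mul _ _).trans ?_
        rw [totalDegree_C, totalDegree_X]
      refine ⟨(totalDegree_sub _ _).trans (max_le (by simp [totalDegree_C]) hdeg),
        (totalDegree_neg _).le.trans hdeg, fun γ hγ => ?_⟩
      rw [coeff_sub, coeff_C, if_neg (hne γ hγ), zero_sub, coeff_neg]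
    have Tpow : TopEq a ((C wl + S) ^ a) (S ^ a) := by
      have := T1.pow a
      rwa [mul_one] at this
    have Tprod : TopEq A'
        (∏ i : Fin (m+1), (C (X i.castSucc) - C wl * X i) ^ (α i.castSucc))
        (∏ i : Fin (m+1), (-(C wl * X i)) ^ (α i.castSucc)) := by
      have := TopEq.prod Finset.univ _ _ (fun i : Fin (m+1) => α i.castSucc * 1)
        (fun i _ => (T2 i).pow (α i.castSucc))
      simpa [mul_one] using this
    have Tall := Tpow.mul Tprod
    have hcoeff : coeff β (Aprod m α) =
        coeff β (S ^ a * ∏ i : Fin (m+1), (-(C wl * X i)) ^ (α i.castSucc)) := by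
      refine Tall.2.2 β ?_
      rw [deg_eq_sum, hdegβ]
      omega
    rw [hcoeff]
    set αvec : Fin (m + 1) →₀ ℕ := ∑ i : Fin (m+1), Finsupp.single i (α i.castSucc) with hαvec
    have hM : (∏ i : Fin (m+1), (-(C wl * X i)) ^ (α i.castSucc)) =
        C ((-wl) ^ A') * monomial αvec (1 : R) := by
      have hXprod : (∏ i : Fin (m+1), (X i : MvPolynomial (Fin (m+1)) R) ^ (α i.castSucc)) =
          monomial αvec 1 := by
        simp_rw [X_pow_eq_monomial]
        rw [hαvec, ← monomial_finset_sum]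
      have hfac : ∀ i : Fin (m+1),
          (-(C wl * X i) : MvPolynomial (Fin (m+1)) R) = C (-wl) * X i := by
        intro i
        rw [map_neg]
        exact (neg_mul (C wl : MvPolynomial (Fin (m+1)) R) (X i)).symm
      simp_rw [hfac, mul_pow]
      rw [Finset.prod_mul_distrib, hXprod]
      simp_rw [← map_pow (C (σ := Fin (m+1)) (R := R))]
      rw [← map_prod, Finset.prod_pow_eq_pow_sum]
    rw [hM, mul_left_comm, coeff_C_mul, coeff_mul_monomial']
    have hαvec_apply : ∀ i, αvec i = α i.castSucc := fun i => sum_single_apply _ i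
    have hdomiff : αvec ≤ β ↔ ∀ i, α i.castSucc ≤ β i := by
      rw [Finsupp.le_def]
      exact forall_congr' fun i => by rw [hαvec_apply i]
    by_cases hdom : ∀ i : Fin (m+1), α i.castSucc ≤ β i
    · rw [if_pos (hdomiff.mpr hdom), if_pos hdom, mul_one]
      have hγi : ∀ i, (β - αvec) i = β i - α i.castSucc := by
        intro i
        rw [Finsupp.tsub_apply, hαvec_apply i]
      have hγsum : ∑ i, (β - αvec) i = a := by
        have h1 : ∑ i, β i = ∑ i, ((β i - α i.castSucc) + α i.castSucc) :=
          Finset.sum_congr rfl fun i _ => (Nat.sub_add_cancel (hdom i)).symm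
        rw [Finset.sum_add_distrib] at h1
        have h2 : ∑ i, (β - αvec) i = ∑ i, (β i - α i.castSucc) :=
          Finset.sum_congr rfl fun i _ => hγi i
        omega
      rw [coeff_sum_C_mul_X_pow _ a _ hγsum]
      simp_rw [hγi]
      have hmon : (monomial (Finsupp.single L A' +
            ∑ i : Fin (m+1), Finsupp.single i.castSucc (β i - α i.castSucc)) (1 : ℝ) : R) =
          X L ^ A' * ∏ i : Fin (m+1), (X i.castSucc : R) ^ (β i - α i.castSucc) := by
        have hp : (∏ i : Fin (m+1), (X i.castSucc : R) ^ (β i - α i.castSucc)) =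
            monomial (∑ i : Fin (m+1), Finsupp.single i.castSucc (β i - α i.castSucc)) 1 := by
          simp_rw [X_pow_eq_monomial]
          rw [← monomial_finset_sum]
        rw [hp, X_pow_eq_monomial, monomial_mul, one_mul]
      rw [hmon, neg_pow]
      ring
    · rw [if_neg (fun h => hdom (hdomiff.mp h)), if_neg hdom, mul_zero, zero_mul, zero_mul]
  · intro _
    refine ⟨Finsupp.equivFunOnFinite.symm
      (fun i => α i.castSucc + if i = 0 then α (Fin.last (m+1)) else 0), ?_, fun i => ?_⟩
    · rw [show ∀ γ : Fin (m+1) →₀ ℕ, (γ.sum fun _ k => k) = deg γ from fun _ => rfl,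
        deg_eq_sum, hαsum]
      simp only [Finsupp.coe_equivFunOnFinite_symm]
      rw [Finset.sum_add_distrib, Finset.sum_ite_eq' Finset.univ (0 : Fin (m+1))]
      simp [ha, hA', hL]
    · simp [Finsupp.coe_equivFunOnFinite_symm]
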